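/- For every S ∈ [0,1], the inequality inf_{γ∈ℝ} { H_A(γ) − (1/2)γS } − (S² − 1) = S − S² ≥ 0 holds, with strict inequality exactly when S ∈ (0,1). -/
import Mathlib


/-- With `H_A(γ) = sup_{u∈[−1,1]} ((1/2) γ u² − (1 − u⁴))`, for `S ∈ [0,1]`:
`inf_γ { H_A(γ) − (1/2) γ S } − (S² − 1) = S − S² ≥ 0`, strictly positive exactly
when `S ∈ (0,1)`. -/
theorem stmt12 (S : ℝ) (hS : S ∈ Set.Icc (0:ℝ) 1) :
    let H : ℝ → ℝ := fun γ =>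
      sSup {y : ℝ | ∃ u ∈ Set.Icc (-1:ℝ) 1, y = (1/2) * γ * u ^ 2 - (1 - u ^ 4)}
    sInf {y : ℝ | ∃ γ : ℝ, y = H γ - (1/2) * γ * S} - (S ^ 2 - 1) = S - S ^ 2 ∧
    0 ≤ S - S ^ 2 ∧
    (0 < S - S ^ 2 ↔ S ∈ Set.Ioo (0:ℝ) 1) := by
  obtain ⟨hS0, hS1⟩ := hS
  intro H
  have hH : ∀ γ : ℝ, H γ = max ((1/2) * γ) (-1) := by
    intro γ
    apply IsGreatest.csSup_eq
    constructor
    · rcases le_total ((1/2) * γ) (-1) with h | h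
      · rw [max_eq_right h]
        exact ⟨0, by norm_num⟩
      · rw [max_eq_left h]
        exact ⟨1, by constructor <;> norm_num⟩
    · rintro y ⟨u, ⟨hu1, hu2⟩, rfl⟩
      rcases le_total (-2) γ with h | h
      · apply le_max_of_le_left
        have hu : u ^ 2 ≤ 1 := by nlinarith
        nlinarith [mul_nonneg (by nlinarith : (0:ℝ) ≤ 1 - u ^ 2)
          (by nlinarith : (0:ℝ) ≤ 1 / 2 * γ + u ^ 2 + 1)]
      · apply le_max_of_le_right
        have hu : u ^ 2 ≤ 1 := by nlinarith
        nlinarith [mul_nonneg (sq_nonneg u) (by nlinarith : (0:ℝ) ≤ -(1 / 2 * γ) - 1),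
          mul_nonneg (sq_nonneg u) (by nlinarith : (0:ℝ) ≤ 1 - u ^ 2)]
  have hinf : sInf {y : ℝ | ∃ γ : ℝ, y = H γ - (1/2) * γ * S} = S - 1 := by
    apply IsLeast.csInf_eq
    constructor
    · refine ⟨-2, ?_⟩
      rw [hH]
      norm_num
      ring
    · rintro y ⟨γ, rfl⟩
      rw [hH]
      rcases le_total ((1/2) * γ) (-1) with h | h
      · rw [max_eq_right h]; nlinarith
      · rw [max_eq_left h]; nlinarith
  rw [hinf]
  refine ⟨by ring, by nlinarith, ?_⟩
  constructor
  · intro h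
    constructor <;> nlinarith
  · rintro ⟨h1, h2⟩
    nlinarith
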